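/- Let Γʷ(s) be a fixed (rigid, stationary) C¹ space curve observed by a moving camera as in the context, with camera coordinates Γ(s,t) = R(t)Γʷ(s) + 𝑻(t), depth ρ > 0, and image curve γ(s,t) = Γ/ρ. Then at t = 0 the spatial variation of the image velocity field along the curve is γ_st = (−V + V_z γ)(ρ_s/ρ²) − (V_z/ρ)γ_s + Ω̂γ_s − ⟨e₃, Ω̂γ_s⟩γ − ⟨e₃, Ω̂γ⟩γ_s, where the spatial depth derivative satisfies ρ_s = ⟨e₃, Γ_s⟩. -/

import Mathlib

open scoped RealInnerProductSpace

attribute [local instance] Matrix.frobeniusNormedAddCommGroup Matrix.frobeniusNormedSpace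

noncomputable section

/-- ℝ³ with the Euclidean inner product. -/
abbrev V3 : Type := EuclideanSpace ℝ (Fin 3)

/-- The third standard basis vector e₃ = (0,0,1). -/
def e3 : V3 := WithLp.toLp 2 (![0, 0, 1] : Fin 3 → ℝ)

/-- Matrix–vector multiplication, valued in ℝ³ with the Euclidean structure. -/
def mulV (A : Matrix (Fin 3) (Fin 3) ℝ) (v : V3) : V3 := WithLp.toLp 2 (A.mulVec v)


/-- `A ↦ mulV A v` as a continuous linear map. -/
def mulVL (v : V3) : Matrix (Fin 3) (Fin 3) ℝ →L[ℝ] V3 :=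
  LinearMap.toContinuousLinearMap
    { toFun := fun A => mulV A v
      map_add' := fun A B => by simp [mulV, Matrix.add_mulVec]
      map_smul' := fun c A => by simp [mulV, Matrix.smul_mulVec] }

/-- `x ↦ mulV A x` as a continuous linear map. -/
def matCLM (A : Matrix (Fin 3) (Fin 3) ℝ) : V3 →L[ℝ] V3 :=
  LinearMap.toContinuousLinearMap
    { toFun := fun x => mulV A x
      map_add' := fun x y => by simp [mulV, Matrix.mulVec_add]
      map_smul' := fun c x => by simp [mulV, Matrix.mulVec_smul] }

set_option maxHeartbeats 1000000

/-- spatial variation of the image velocity field of a fixed space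
curve: at `t = 0`,
`γ_st = (−V + V_zγ)(ρ_s/ρ²) − (V_z/ρ)γ_s + Ω̂γ_s − ⟨e₃,Ω̂γ_s⟩γ − ⟨e₃,Ω̂γ⟩γ_s`,
where `ρ_s = ⟨e₃, Γ_s⟩`. -/
theorem spatial_variation_of_image_velocity
    (R R' : ℝ → Matrix (Fin 3) (Fin 3) ℝ)
    (Tr Tr' : ℝ → V3)
    (Γw : ℝ → V3)
    (Γ : ℝ → ℝ → V3) (Γs : ℝ → V3)
    (ρ : ℝ → ℝ → ℝ) (ρs : ℝ → ℝ)
    (γ γs γt : ℝ → ℝ → V3) (γst : ℝ → V3)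
    -- camera motion: R(t) ∈ SO(3), C¹, with R(0) = I, 𝑻(0) = 0
    (hRorth : ∀ t, R t * (R t).transpose = 1)
    (hRdet : ∀ t, (R t).det = 1)
    (hR' : ∀ t, HasDerivAt R (R' t) t)
    (hR0 : R 0 = 1)
    (hTr' : ∀ t, HasDerivAt Tr (Tr' t) t)
    (hTr0 : Tr 0 = 0)
    -- fixed curve in camera coordinates, depth and image
    (hΓ : ∀ s t, Γ s t = mulV (R t) (Γw s) + Tr t)
    (hΓs : ∀ s, HasDerivAt (fun σ => Γ σ 0) (Γs s) s)
    (hρ : ∀ s t, ρ s t = ⟪e3, Γ s t⟫)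
    (hρpos : ∀ s t, 0 < ρ s t)
    (hρs : ∀ s, HasDerivAt (fun σ => ρ σ 0) (ρs s) s)
    (hγ : ∀ s t, γ s t = (ρ s t)⁻¹ • Γ s t)
    -- partial derivatives of the image curve
    (hγs : ∀ s t, HasDerivAt (fun σ => γ σ t) (γs s t) s)
    (hγt : ∀ s t, HasDerivAt (fun τ => γ s τ) (γt s t) t)
    -- mixed partial derivative at t = 0
    (hγst : ∀ s, HasDerivAt (fun σ => γt σ 0) (γst s) s) :
    -- conclusion at t = 0, with Ω̂ = R′(0)R(0)ᵀ, V = 𝑻′(0), V_z = ⟨e₃,V⟩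
    ∀ s,
      (let Ωh := R' 0 * (R 0).transpose
       let V := Tr' 0
       γst s = (ρs s / (ρ s 0) ^ 2) • (-V + ⟪e3, V⟫ • γ s 0)
          - (⟪e3, V⟫ / ρ s 0) • γs s 0
          + mulV Ωh (γs s 0)
          - ⟪e3, mulV Ωh (γs s 0)⟫ • γ s 0
          - ⟪e3, mulV Ωh (γ s 0)⟫ • γs s 0)
      ∧ ρs s = ⟪e3, Γs s⟫ := by
  intro s
  have hne : ∀ σ, ρ σ 0 ≠ 0 := fun σ => (hρpos σ 0).ne'
  set M : V3 →L[ℝ] V3 := matCLM (R' 0) with hMdef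
  have hMapp : ∀ x, M x = mulV (R' 0) x := fun _ => rfl
  -- Γ(σ,0) = Γw σ
  have hΓ0 : ∀ σ, Γw σ = Γ σ 0 := by
    intro σ
    rw [hΓ, hR0, hTr0]
    simp [mulV, Matrix.one_mulVec]
  -- time derivative of Γ at t = 0
  have hΓt : ∀ σ, HasDerivAt (fun τ => Γ σ τ) (M (Γ σ 0) + Tr' 0) 0 := by
    intro σ
    have h1 : HasDerivAt (fun τ => mulV (R τ) (Γw σ)) (mulV (R' 0) (Γw σ)) 0 := by
      exact (mulVL (Γw σ)).hasFDerivAt.comp_hasDerivAt 0 (hR' 0)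
    have h2 := h1.add (hTr' 0)
    have heq : (fun τ => Γ σ τ) = fun τ => mulV (R τ) (Γw σ) + Tr τ := funext fun τ => hΓ σ τ
    rw [heq, hMapp, ← hΓ0]
    exact h2
  -- time derivative of ρ at t = 0
  have hρt : ∀ σ, HasDerivAt (fun τ => ρ σ τ) (⟪e3, M (Γ σ 0) + Tr' 0⟫ : ℝ) 0 := by
    intro σ
    have heq : (fun τ => ρ σ τ) = fun τ => ⟪e3, Γ σ τ⟫ := funext fun τ => hρ σ τ
    rw [heq]
    simpa [Function.comp_def] using (innerSL ℝ e3).hasFDerivAt.comp_hasDerivAt 0 (hΓt σ)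
  -- formula for γt at t = 0
  have key : ∀ σ, γt σ 0 =
      (ρ σ 0)⁻¹ • (M (Γ σ 0) + Tr' 0)
        + (-(⟪e3, M (Γ σ 0) + Tr' 0⟫ : ℝ) / (ρ σ 0) ^ 2) • Γ σ 0 := by
    intro σ
    have h := ((hρt σ).inv (hne σ)).smul (hΓt σ)
    refine (hγt σ 0).unique ?_
    have heq : (fun τ => γ σ τ) = fun τ => (ρ σ τ)⁻¹ • Γ σ τ := funext fun τ => hγ σ τ
    rw [heq]
    exact h
  -- formula for γs at t = 0
  have hγsf : γs s 0 = (ρ s 0)⁻¹ • Γs s + (-(ρs s) / (ρ s 0) ^ 2) • Γ s 0 := by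
    have h := ((hρs s).inv (hne s)).smul (hΓs s)
    refine (hγs s 0).unique ?_
    have heq : (fun σ => γ σ 0) = fun σ => (ρ σ 0)⁻¹ • Γ σ 0 := funext fun σ => hγ σ 0
    rw [heq]
    exact h
  -- ρs = ⟨e3, Γs⟩
  have hρsf : ρs s = ⟪e3, Γs s⟫ := by
    refine (hρs s).unique ?_
    have heq : (fun σ => ρ σ 0) = fun σ => ⟪e3, Γ σ 0⟫ := funext fun σ => hρ σ 0
    rw [heq]
    simpa [Function.comp_def] using (innerSL ℝ e3).hasFDerivAt.comp_hasDerivAt s (hΓs s)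
  refine ⟨?_, hρsf⟩
  -- spatial derivative of γt(·,0)
  have hMΓ : HasDerivAt (fun σ => M (Γ σ 0)) (M (Γs s)) s := by
    simpa [Function.comp_def] using M.hasFDerivAt.comp_hasDerivAt s (hΓs s)
  have hMΓV : HasDerivAt (fun σ => M (Γ σ 0) + Tr' 0) (M (Γs s)) s := by
    simpa using hMΓ.add_const (Tr' 0)
  have hinner : HasDerivAt (fun σ => (⟪e3, M (Γ σ 0) + Tr' 0⟫ : ℝ)) (⟪e3, M (Γs s)⟫ : ℝ) s := by
    simpa [Function.comp_def] using (innerSL ℝ e3).hasFDerivAt.comp_hasDerivAt s hMΓV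
  have hρsq : HasDerivAt (fun σ => (ρ σ 0) ^ 2) (2 * ρ s 0 * ρs s) s := by
    simpa [Pi.pow_def] using (hρs s).pow 2
  have hnesq : (ρ s 0) ^ 2 ≠ 0 := pow_ne_zero 2 (hne s)
  have hc : HasDerivAt (fun σ => -(⟪e3, M (Γ σ 0) + Tr' 0⟫ : ℝ) / (ρ σ 0) ^ 2)
      ((-(⟪e3, M (Γs s)⟫ : ℝ) * (ρ s 0) ^ 2
        - (-(⟪e3, M (Γ s 0) + Tr' 0⟫ : ℝ)) * (2 * ρ s 0 * ρs s)) / ((ρ s 0) ^ 2) ^ 2) s :=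
    hinner.neg.div hρsq hnesq
  have hD := (((hρs s).inv (hne s)).smul hMΓV).add (hc.smul (hΓs s))
  have hγstf : γst s =
      ((ρ s 0)⁻¹ • M (Γs s) + (-(ρs s) / (ρ s 0) ^ 2) • (M (Γ s 0) + Tr' 0))
      + ((-(⟪e3, M (Γ s 0) + Tr' 0⟫ : ℝ) / (ρ s 0) ^ 2) • Γs s
        + ((-(⟪e3, M (Γs s)⟫ : ℝ) * (ρ s 0) ^ 2
        - (-(⟪e3, M (Γ s 0) + Tr' 0⟫ : ℝ)) * (2 * ρ s 0 * ρs s)) / ((ρ s 0) ^ 2) ^ 2) • Γ s 0) := by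
    refine (hγst s).unique ?_
    have heq : (fun σ => γt σ 0) =
        fun σ => (ρ σ 0)⁻¹ • (M (Γ σ 0) + Tr' 0)
          + (-(⟪e3, M (Γ σ 0) + Tr' 0⟫ : ℝ) / (ρ σ 0) ^ 2) • Γ σ 0 := funext fun σ => key σ
    rw [heq]
    exact hD
  -- final algebra
  intro Ωh V
  have hΩ : Ωh = R' 0 := by
    simp [Ωh, hR0]
  have hmul : ∀ x, mulV Ωh x = M x := by intro x; rw [hΩ, hMapp]
  rw [hγstf, hγ s 0, hγsf, hρsf]
  simp only [hmul, map_add, map_smul, map_neg, inner_add_right,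
    real_inner_smul_right, inner_neg_right]
  match_scalars <;> (field_simp [hne s]; try ring) <;> (field_simp [hne s]; try ring) <;> ring
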